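/- Let p be an odd prime and let m be a nonnegative integer with m < (p-1)/2. Then for every integer j with m + 1 ≤ j ≤ p - m - 2, one has ∑_{k=p-1-j}^{p-m-1} C(m+k,k)·C(k,p-1-j) / ((k-m)·C(k,m)) ≡ (-1)^j · C(p-m-1,j-m) / ((j+1)·C(p-m-1,j+1)) (mod p), as a congruence of p-integral rational numbers. -/

import Mathlib

open Finset Nat

variable {F : Type*} [Field F]

/-- factorial nonvanishing descends -/
lemma fact_ne_of_le {a b : ℕ} (h : a ≤ b) (hb : ((b.factorial : F)) ≠ 0) :
    ((a.factorial : F)) ≠ 0 := by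
  obtain ⟨c, hc⟩ := Nat.factorial_dvd_factorial h
  intro h0
  apply hb
  rw [hc]; push_cast; rw [h0, zero_mul]

/-- Beta function in factorial form -/
noncomputable def Hb (F : Type*) [Field F] (a b : ℕ) : F :=
  (a.factorial * b.factorial) / ((a + b + 1).factorial)

lemma beta_pascal (a b : ℕ) (h : ((a + b + 2).factorial : F) ≠ 0) :
    Hb F a b = Hb F (a+1) b + Hb F a (b+1) := by
  have h1 : ((a + b + 1).factorial : F) ≠ 0 := fact_ne_of_le (by omega) h
  have e3 : ((a + b + 2).factorial : F) = (a + b + 2 : F) * ((a + b + 1).factorial : F) := by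
    rw [show a + b + 2 = (a+b+1) + 1 by omega, Nat.factorial_succ]
    push_cast; ring
  have hne : (a + b + 2 : F) ≠ 0 := by
    intro h0; rw [e3, h0, zero_mul] at h; exact h rfl
  unfold Hb
  rw [show (a + 1) + b + 1 = a + b + 2 by omega, show a + (b + 1) + 1 = a + b + 2 by omega,
    ← add_div, e3]
  rw [Nat.factorial_succ a, Nat.factorial_succ b]
  push_cast
  rw [show ((a:F)+1) * a.factorial * b.factorial + a.factorial * (((b:F)+1) * b.factorial)
      = ((a:F)+(b:F)+2) * (a.factorial * b.factorial) by ring]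
  rw [mul_div_mul_left _ _ (by push_cast at hne ⊢; exact hne)]

lemma key_sum (b : ℕ) : ∀ (J a : ℕ), (((a + b + J + 1).factorial : F) ≠ 0) →
    ∑ s ∈ range (J+1), (-1:F)^s * (J.choose s) * Hb F (a+s) b = Hb F a (b+J) := by
  intro J
  induction J with
  | zero =>
    intro a _
    simp [Hb]
  | succ J ih =>
    intro a hfac
    have hfac1 : ((a + b + J + 1).factorial : F) ≠ 0 := fact_ne_of_le (by omega) hfac
    have hfac2 : (((a+1) + b + J + 1).factorial : F) ≠ 0 := by
      apply fact_ne_of_le (b := a + b + (J+1) + 1) (by omega) hfac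
    have expand : ∑ s ∈ range (J+2), (-1:F)^s * ((J+1).choose s) * Hb F (a+s) b
        = (∑ s ∈ range (J+1), (-1:F)^s * (J.choose s) * Hb F (a+s) b)
          - ∑ s ∈ range (J+1), (-1:F)^s * (J.choose s) * Hb F ((a+1)+s) b := by
      rw [Finset.sum_range_succ' (fun s => (-1:F)^s * ((J+1).choose s) * Hb F (a+s) b) (J+1)]
      have step : ∀ i, (-1:F)^(i+1) * ((J+1).choose (i+1)) * Hb F (a+(i+1)) b
          = (-1:F)^(i+1) * (J.choose (i+1)) * Hb F (a+(i+1)) b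
            - (-1:F)^i * (J.choose i) * Hb F ((a+1)+i) b := by
        intro i
        rw [Nat.choose_succ_succ J i]
        have : a + (i+1) = (a+1) + i := by omega
        rw [this]
        push_cast
        ring
      rw [Finset.sum_congr rfl (fun i _ => step i), Finset.sum_sub_distrib]
      have reassemble : ∑ i ∈ range (J+1), (-1:F)^(i+1) * (J.choose (i+1)) * Hb F (a+(i+1)) b
          = (∑ s ∈ range (J+1), (-1:F)^s * (J.choose s) * Hb F (a+s) b)
            - (-1:F)^0 * (J.choose 0) * Hb F (a+0) b := by
        have h1 := Finset.sum_range_succ' (fun s => (-1:F)^s * (J.choose s) * Hb F (a+s) b) (J+1)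
        have h2 := Finset.sum_range_succ (fun s => (-1:F)^s * (J.choose s) * Hb F (a+s) b) (J+1)
        have zj : ((-1:F)^(J+1) * (J.choose (J+1)) * Hb F (a+(J+1)) b) = 0 := by
          rw [Nat.choose_succ_self]; push_cast; ring
        rw [h2, zj, add_zero] at h1
        rw [h1]
        ring
      rw [reassemble]
      simp only [Nat.choose_zero_right]
      ring
    rw [show J + 1 + 1 = J + 2 by rfl, expand, ih a hfac1, ih (a+1) hfac2]
    have bp := beta_pascal (F := F) a (b + J) (by
      apply fact_ne_of_le (b := a + b + (J+1) + 1) (by omega) hfac)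
    rw [show b + (J+1) = (b+J) + 1 by omega]
    rw [bp]; ring

lemma cast_factorial_succ (n : ℕ) (h : (((n+1).factorial : F)) ≠ 0) : ((n:F) + 1) ≠ 0 := by
  rw [Nat.factorial_succ] at h
  push_cast at h
  exact fun h0 => h (by rw [h0, zero_mul])

lemma cast_choose' {n k : ℕ} (h : k ≤ n) (hn : ((n.factorial : F)) ≠ 0) :
    (n.choose k : F) = (n.factorial : F) / ((k.factorial : F) * ((n-k).factorial : F)) := by
  have hk : ((k.factorial : F)) ≠ 0 := fact_ne_of_le h hn
  have hnk : (((n-k).factorial : F)) ≠ 0 := fact_ne_of_le (by omega) hn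
  rw [eq_div_iff (mul_ne_zero hk hnk)]
  have := Nat.choose_mul_factorial_mul_factorial h
  push_cast [← this]
  ring

lemma term_eq (m J s : ℕ) (hsJ : s ≤ J) (hfac : (((m + J + m + 1).factorial : F)) ≠ 0) :
    ((-1:F)^(m+s) * (((m+s).choose m : ℕ) : F) * (((m+J).choose (m+s) : ℕ) : F) /
        ((((m+s:ℕ)):F)+(m:F)+1) / (((((m+s)+m).choose m : ℕ) : F)))
      = ((-1:F)^m * ((m+J).factorial : F) / ((J.factorial : F) * (m.factorial : F)))
        * ((-1:F)^s * ((J.choose s : ℕ) : F) * Hb F (m+s) m) := by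
  have hmJ : ((m+J).factorial : F) ≠ 0 := fact_ne_of_le (by omega) hfac
  have hm : ((m.factorial : F)) ≠ 0 := fact_ne_of_le (by omega) hfac
  have hJ : ((J.factorial : F)) ≠ 0 := fact_ne_of_le (by omega) hfac
  have h1 : (((m+s+m+1).factorial : F)) ≠ 0 := fact_ne_of_le (by omega) hfac
  have h2 : (((m+s+m).factorial : F)) ≠ 0 := fact_ne_of_le (by omega) hfac
  have hms : (((m+s).factorial : F)) ≠ 0 := fact_ne_of_le (by omega) hfac
  have hsf : ((s.factorial : F)) ≠ 0 := fact_ne_of_le (by omega) hfac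
  have hJs : (((J-s).factorial : F)) ≠ 0 := fact_ne_of_le (by omega) hfac
  have hc1 : (((m+s).choose m : ℕ) : F) = ((m+s).factorial : F) / ((m.factorial : F) * ((s).factorial : F)) := by
    rw [cast_choose' (by omega) hms, show m + s - m = s by omega]
  have hc2 : (((m+J).choose (m+s) : ℕ) : F) = ((m+J).factorial : F) / (((m+s).factorial : F) * (((J-s)).factorial : F)) := by
    rw [cast_choose' (by omega) hmJ, show m + J - (m + s) = J - s by omega]
  have hc3 : ((((m+s)+m).choose m : ℕ) : F) = ((m+s+m).factorial : F) / ((m.factorial : F) * (((m+s)).factorial : F)) := by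
    rw [cast_choose' (by omega) h2, show m + s + m - m = m + s by omega]
  have hc4 : ((J.choose s : ℕ) : F) = (J.factorial : F) / ((s.factorial : F) * (((J-s)).factorial : F)) :=
    cast_choose' hsJ hJ
  have hcast : ((((m+s:ℕ)):F)+(m:F)+1) ≠ 0 := by
    have h := cast_factorial_succ (F := F) (m+s+m) h1
    push_cast at h ⊢
    intro h0
    exact h (by linear_combination h0)
  have hfacsucc : ((m+s+m+1).factorial : F) = (((((m+s:ℕ)):F)+(m:F)+1)) * ((m+s+m).factorial : F) := by
    rw [Nat.factorial_succ]
    push_cast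
    ring
  rw [hc1, hc2, hc3, hc4]
  unfold Hb
  have hlin : ((((m+s:ℕ)):F)+(m:F)+1) = ((m+s+m+1).factorial : F) / ((m+s+m).factorial : F) := by
    rw [hfacsucc, mul_div_assoc, div_self h2, mul_one]
  rw [show (m+s) + m + 1 = m+s+m+1 from rfl, hlin, pow_add]
  field_simp

lemma main_field (m J : ℕ) (hfac : (((m + J + m + 1).factorial : F)) ≠ 0) :
    ∑ s ∈ range (J+1), ((-1:F)^(m+s) * (((m+s).choose m : ℕ) : F) * (((m+J).choose (m+s) : ℕ) : F) /
        ((((m+s:ℕ)):F)+(m:F)+1) / (((((m+s)+m).choose m : ℕ) : F)))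
      = (-1:F)^m * (((m+J).choose m : ℕ) : F) / ((((m+J:ℕ)):F)+1) /
          (((m+(m+J)+1).choose ((m+J)+1) : ℕ) : F) := by
  have hmJ : ((m+J).factorial : F) ≠ 0 := fact_ne_of_le (by omega) hfac
  have hm : ((m.factorial : F)) ≠ 0 := fact_ne_of_le (by omega) hfac
  have hJ : ((J.factorial : F)) ≠ 0 := fact_ne_of_le (by omega) hfac
  have hMJ1 : (((m+(m+J)+1).factorial : F)) ≠ 0 := by
    have h := hfac
    rwa [show m+J+m+1 = m+(m+J)+1 by omega] at h
  have hMJs : ((((m+J)+1).factorial : F)) ≠ 0 := fact_ne_of_le (by omega) hfac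
  rw [Finset.sum_congr rfl (fun s hs => term_eq (F := F) m J s
    (Nat.lt_succ_iff.mp (Finset.mem_range.mp hs)) hfac)]
  rw [← Finset.mul_sum]
  rw [key_sum (F := F) m J m (by rwa [show m+m+J+1 = m+J+m+1 by omega])]
  have hc5 : (((m+J).choose m : ℕ) : F) = ((m+J).factorial : F) / ((m.factorial : F) * (J.factorial : F)) := by
    rw [cast_choose' (by omega) hmJ, show m + J - m = J by omega]
  have hc6 : (((m+(m+J)+1).choose ((m+J)+1) : ℕ) : F)
      = ((m+(m+J)+1).factorial : F) / (((((m+J)+1)).factorial : F) * (m.factorial : F)) := by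
    rw [cast_choose' (by omega) hMJ1, show m+(m+J)+1 - ((m+J)+1) = m by omega]
  have hj1 : ((((m+J:ℕ)):F)+1) ≠ 0 := by
    have h := cast_factorial_succ (F := F) (m+J) hMJs
    push_cast at h ⊢
    exact h
  have hlin : ((((m+J:ℕ)):F)+1) = ((((m+J)+1)).factorial : F) / ((m+J).factorial : F) := by
    rw [Nat.factorial_succ]
    push_cast
    rw [mul_div_assoc, div_self hmJ, mul_one]
  rw [hc5, hc6, hlin]
  unfold Hb
  field_simp

section ZModPart

variable (p : ℕ) [hp : Fact p.Prime]

lemma fact_cast_ne {n : ℕ} (h : n < p) : ((n.factorial : ℕ) : ZMod p) ≠ 0 := by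
  rw [Ne, ZMod.natCast_eq_zero_iff]
  intro hdvd
  exact absurd ((Nat.Prime.dvd_factorial hp.out).mp hdvd) (by omega)

lemma cast_ne_of_lt {n : ℕ} (h0 : 0 < n) (h : n < p) : ((n : ℕ) : ZMod p) ≠ 0 := by
  rw [Ne, ZMod.natCast_eq_zero_iff]
  intro hdvd
  have := Nat.le_of_dvd h0 hdvd
  omega

set_option maxRecDepth 4000 in
lemma choose_reflect (s r : ℕ) (h : s + r + 1 ≤ p) :
    (((p-1-s).choose r : ℕ) : ZMod p) = (-1:ZMod p)^r * (((s+r).choose r : ℕ) : ZMod p) := by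
  have hr : ((r.factorial : ℕ) : ZMod p) ≠ 0 := fact_cast_ne p (by omega)
  apply mul_right_cancel₀ hr
  have d1 : (p-1-s).choose r * r.factorial = (p-1-s).descFactorial r := by
    rw [Nat.descFactorial_eq_factorial_mul_choose]; ring
  have d2 : (s+r).choose r * r.factorial = (s+r).descFactorial r := by
    rw [Nat.descFactorial_eq_factorial_mul_choose]; ring
  have e1 : (((p-1-s).choose r : ℕ) : ZMod p) * ((r.factorial : ℕ) : ZMod p)
      = (((p-1-s).descFactorial r : ℕ) : ZMod p) := by
    rw [← Nat.cast_mul, d1]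
  have e2 : (((s+r).choose r : ℕ) : ZMod p) * ((r.factorial : ℕ) : ZMod p)
      = (((s+r).descFactorial r : ℕ) : ZMod p) := by
    rw [← Nat.cast_mul, d2]
  rw [e1, mul_assoc, e2]
  rw [Nat.descFactorial_eq_prod_range, Nat.descFactorial_eq_prod_range]
  push_cast
  have f1 : ∀ i ∈ range r, ((p-1-s-i : ℕ) : ZMod p) = -(((s+i+1 : ℕ)) : ZMod p) := by
    intro i hi
    have hi' : i < r := Finset.mem_range.mp hi
    have : p-1-s-i = p - (s+i+1) := by omega
    rw [this, Nat.cast_sub (by omega), ZMod.natCast_self, zero_sub]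
  have f2 : ∀ i ∈ range r, ((s+r-i : ℕ) : ZMod p) = (((s+r-i : ℕ)) : ZMod p) := fun _ _ => rfl
  rw [Finset.prod_congr rfl f1]
  have g1 : ∏ i ∈ range r, (-(((s+i+1 : ℕ)) : ZMod p)) = (-1:ZMod p)^r * ∏ i ∈ range r, (((s+i+1 : ℕ)) : ZMod p) := by
    rw [Finset.prod_congr rfl (fun i _ => (neg_one_mul (((s+i+1 : ℕ)) : ZMod p)).symm),
      Finset.prod_mul_distrib, Finset.prod_const, Finset.card_range]
  rw [g1]
  congr 1
  have g2 : ∏ i ∈ range r, ((s+r-i : ℕ) : ZMod p) = ∏ i ∈ range r, (((s+i+1 : ℕ)) : ZMod p) := by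
    rw [← Finset.prod_range_reflect (fun i => (((s+i+1 : ℕ)) : ZMod p)) r]
    apply Finset.prod_congr rfl
    intro i hi
    have : i < r := Finset.mem_range.mp hi
    congr 1
    omega
  exact g2.symm

lemma choose_cast_ne {n k : ℕ} (hk : k ≤ n) (hn : n < p) : ((n.choose k : ℕ) : ZMod p) ≠ 0 := by
  intro h0
  have hfa : ((n.factorial : ℕ) : ZMod p)
      = ((n.choose k : ℕ) : ZMod p) * ((k.factorial : ℕ) : ZMod p) * (((n-k).factorial : ℕ) : ZMod p) := by
    rw [← Nat.cast_mul, ← Nat.cast_mul, Nat.choose_mul_factorial_mul_factorial hk]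
  apply fact_cast_ne p hn
  rw [hfa, h0, zero_mul, zero_mul]

lemma zterm (m J s : ℕ) (hs : s ≤ J) (hJ : 1 ≤ J) (hP : m+J+m+2 ≤ p) :
    ((((m+(p-1-(m+s))).choose (p-1-(m+s)) * (p-1-(m+s)).choose (p-1-(m+J)) : ℕ)) : ZMod p) /
        ((((p-1-(m+s))-m) * (p-1-(m+s)).choose m : ℕ) : ZMod p)
      = (-(1:ZMod p)) * (-1:ZMod p)^(m+J) *
          ((-1:ZMod p)^(m+s) * (((m+s).choose m : ℕ) : ZMod p) * (((m+J).choose (m+s) : ℕ) : ZMod p) /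
            ((((m+s:ℕ)):ZMod p)+(m:ZMod p)+1) / (((((m+s)+m).choose m : ℕ) : ZMod p))) := by
  have e1 : (((m+(p-1-(m+s))).choose (p-1-(m+s)) : ℕ) : ZMod p)
      = (-1:ZMod p)^m * (((s+m).choose m : ℕ) : ZMod p) := by
    have h := Nat.choose_symm (show m ≤ p-1-s by omega)
    rw [show (p-1-s)-m = p-1-(m+s) by omega] at h
    rw [show m+(p-1-(m+s)) = p-1-s by omega, h]
    exact choose_reflect p s m (by omega)
  have e2 : (((p-1-(m+s)).choose (p-1-(m+J)) : ℕ) : ZMod p)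
      = (-1:ZMod p)^(J-s) * ((((m+s)+(J-s)).choose (J-s) : ℕ) : ZMod p) := by
    have h := Nat.choose_symm (show J-s ≤ p-1-(m+s) by omega)
    rw [show (p-1-(m+s))-(J-s) = p-1-(m+J) by omega] at h
    rw [h]
    exact choose_reflect p (m+s) (J-s) (by omega)
  have e3 : (((p-1-(m+s)).choose m : ℕ) : ZMod p)
      = (-1:ZMod p)^m * ((((m+s)+m).choose m : ℕ) : ZMod p) :=
    choose_reflect p (m+s) m (by omega)
  have e4 : ((((p-1-(m+s))-m : ℕ)) : ZMod p) = -(((m+s:ℕ):ZMod p)+(m:ZMod p)+1) := by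
    rw [show (p-1-(m+s))-m = p - ((m+s)+m+1) by omega, Nat.cast_sub (by omega),
      ZMod.natCast_self, zero_sub]
    push_cast
    ring
  have e5 : ((s+m).choose m : ℕ) = ((m+s).choose m : ℕ) := by
    rw [show s+m = m+s by omega]
  have e6 : (((m+s)+(J-s)).choose (J-s) : ℕ) = ((m+J).choose (m+s) : ℕ) := by
    rw [show (m+s)+(J-s) = m+J by omega,
      show J-s = (m+J)-(m+s) by omega, Nat.choose_symm (by omega)]
  have e7 : (-1:ZMod p)^(J-s) = (-1:ZMod p)^J * (-1:ZMod p)^s := by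
    rw [← pow_add, show J+s = (J-s)+2*s by omega, pow_add, pow_mul, neg_one_sq, one_pow, mul_one]
  have hL : ((((m+s:ℕ)):ZMod p)+(m:ZMod p)+1) ≠ 0 := by
    have := cast_ne_of_lt p (n := (m+s)+m+1) (by omega) (by omega)
    push_cast at this ⊢
    intro h0
    exact this (by linear_combination h0)
  have hC : (((((m+s)+m).choose m : ℕ)) : ZMod p) ≠ 0 :=
    choose_cast_ne p (by omega) (by omega)
  have hinv : ∀ n : ℕ, ((-1:ZMod p)^n)⁻¹ = (-1:ZMod p)^n := by
    intro n
    rw [← inv_pow, inv_neg, inv_one]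
  rw [Nat.cast_mul, Nat.cast_mul, e1, e2, e3, e4, e5, e6, e7,
    pow_add (-1:ZMod p) m J, pow_add (-1:ZMod p) m s]
  simp only [div_eq_mul_inv, mul_inv, inv_neg, hinv]
  ring

lemma main_zmod (m J : ℕ) (hJ : 1 ≤ J) (hP : m+J+m+2 ≤ p) :
    ∑ k ∈ Finset.Icc (p-1-(m+J)) (p-m-1),
      (((m+k).choose k * k.choose (p-1-(m+J)) : ℕ) : ZMod p) / (((k-m) * k.choose m : ℕ) : ZMod p)
    = (-1:ZMod p)^(m+J) * (((p-m-1).choose J : ℕ) : ZMod p) /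
        (((m+J+1) * ((p-m-1).choose (m+J+1)) : ℕ) : ZMod p) := by
  have hinv : ∀ n : ℕ, ((-1:ZMod p)^n)⁻¹ = (-1:ZMod p)^n := by
    intro n
    rw [← inv_pow, inv_neg, inv_one]
  have hre : ∑ k ∈ Finset.Icc (p-1-(m+J)) (p-m-1),
      (((m+k).choose k * k.choose (p-1-(m+J)) : ℕ) : ZMod p) / (((k-m) * k.choose m : ℕ) : ZMod p)
      = ∑ s ∈ range (J+1),
        ((((m+(p-1-(m+s))).choose (p-1-(m+s)) * (p-1-(m+s)).choose (p-1-(m+J)) : ℕ)) : ZMod p) /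
          ((((p-1-(m+s))-m) * (p-1-(m+s)).choose m : ℕ) : ZMod p) := by
    apply Finset.sum_nbij' (i := fun k => p-1-m-k) (j := fun s => p-1-(m+s))
    · intro k hk
      rw [Finset.mem_Icc] at hk
      rw [Finset.mem_range]
      omega
    · intro s hs
      rw [Finset.mem_range] at hs
      rw [Finset.mem_Icc]
      omega
    · intro k hk
      rw [Finset.mem_Icc] at hk
      omega
    · intro s hs
      rw [Finset.mem_range] at hs
      omega
    · intro k hk
      rw [Finset.mem_Icc] at hk
      rw [show p-1-(m+(p-1-m-k)) = k by omega]
  rw [hre]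
  rw [Finset.sum_congr rfl (fun s hs => zterm p m J s (Nat.lt_succ_iff.mp (Finset.mem_range.mp hs)) hJ hP)]
  rw [← Finset.mul_sum]
  rw [main_field (F := ZMod p) m J (fact_cast_ne p (by omega))]
  -- now pure sign/reflect algebra
  have r1 : (((p-m-1).choose J : ℕ) : ZMod p) = (-1:ZMod p)^J * (((m+J).choose m : ℕ) : ZMod p) := by
    have h := Nat.choose_symm (show m ≤ m+J by omega)
    rw [show (m+J)-m = J by omega] at h
    rw [show p-m-1 = p-1-m by omega, choose_reflect p m J (by omega), h]
  have r2 : (((p-m-1).choose (m+J+1) : ℕ) : ZMod p)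
      = (-1:ZMod p)^(m+J+1) * (((m+(m+J)+1).choose ((m+J)+1) : ℕ) : ZMod p) := by
    rw [show p-m-1 = p-1-m by omega, choose_reflect p m (m+J+1) (by omega),
      show m+(m+J+1) = m+(m+J)+1 by omega]
  rw [Nat.cast_mul, r1, r2]
  rw [show ((m+J+1 : ℕ) : ZMod p) = (((m+J:ℕ)):ZMod p)+1 by push_cast; ring]
  rw [show m+J+1 = (m+J)+1 from rfl, pow_succ, pow_add (-1:ZMod p) m J]
  simp only [div_eq_mul_inv, mul_inv, inv_neg, hinv]
  rcases Nat.even_or_odd J with hJp|hJp <;> simp only [hJp.neg_one_pow] <;> ring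

lemma not_dvd_choose {n k : ℕ} (hk : k ≤ n) (hn : n < p) : ¬ p ∣ n.choose k := by
  intro h
  have hdvd : n.choose k ∣ n.factorial :=
    ⟨k.factorial * (n-k).factorial, by rw [← Nat.choose_mul_factorial_mul_factorial hk]; ring⟩
  have := (Nat.Prime.dvd_factorial hp.out).mp (h.trans hdvd)
  omega

lemma norm_nat_div_le (a b : ℕ) (hb : ¬ p ∣ b) : ‖((a : ℚ_[p]) / (b : ℚ_[p]))‖ ≤ 1 := by
  have hb0 : b ≠ 0 := by rintro rfl; exact hb (dvd_zero p)
  have hna : ‖(a : ℚ_[p])‖ ≤ 1 := by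
    have := Padic.norm_int_le_one (p := p) (a : ℤ)
    push_cast at this
    exact this
  have hnb : ‖(b : ℚ_[p])‖ = 1 := by
    have h1 : ‖((b : ℤ) : ℚ_[p])‖ ≤ 1 := Padic.norm_int_le_one _
    have h2 : ¬ ‖((b : ℤ) : ℚ_[p])‖ < 1 := by
      rw [Padic.norm_intCast_lt_one_iff]
      exact_mod_cast hb
    push_cast at h1 h2
    linarith [lt_or_eq_of_le h1]
  rw [norm_div, hnb, div_one]
  exact hna

/-- the p-adic integer a/b -/
noncomputable def mkDiv (a b : ℕ) (hb : ¬ p ∣ b) : ℤ_[p] := ⟨(a : ℚ_[p]) / (b : ℚ_[p]), norm_nat_div_le p a b hb⟩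

lemma mkDiv_coe (a b : ℕ) (hb : ¬ p ∣ b) :
    ((mkDiv p a b hb : ℤ_[p]) : ℚ_[p]) = (a : ℚ_[p]) / (b : ℚ_[p]) := rfl

lemma mkDiv_toZMod (a b : ℕ) (hb : ¬ p ∣ b) :
    PadicInt.toZMod (mkDiv p a b hb) = (a : ZMod p) / (b : ZMod p) := by
  have hb0 : (b : ℚ_[p]) ≠ 0 := by
    have : b ≠ 0 := by rintro rfl; exact hb (dvd_zero p)
    exact_mod_cast this
  have hmul : ((b : ℕ) : ℤ_[p]) * mkDiv p a b hb = ((a : ℕ) : ℤ_[p]) := by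
    apply Subtype.ext
    push_cast [mkDiv_coe]
    rw [mul_div_cancel₀ _ hb0]
  have hzb : ((b : ℕ) : ZMod p) ≠ 0 := by
    rw [Ne, ZMod.natCast_eq_zero_iff]
    exact hb
  have := congrArg PadicInt.toZMod hmul
  rw [map_mul, map_natCast, map_natCast] at this
  rw [eq_div_iff hzb, mul_comm]
  exact this

end ZModPart

lemma padic_coe_sum {p : ℕ} [Fact p.Prime] {ι : Type*} (s : Finset ι) (f : ι → ℤ_[p]) :
    ((∑ i ∈ s, f i : ℤ_[p]) : ℚ_[p]) = ∑ i ∈ s, ((f i : ℤ_[p]) : ℚ_[p]) := by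
  exact map_sum (PadicInt.Coe.ringHom (p := p)) f s

/-- Let `p` be an odd prime and `m < (p-1)/2` a nonnegative integer. For every
`m + 1 ≤ j ≤ p - m - 2`,
`∑_{k=p-1-j}^{p-m-1} C(m+k,k) C(k,p-1-j) / ((k-m) C(k,m))
  ≡ (-1)^j C(p-m-1,j-m) / ((j+1) C(p-m-1,j+1)) (mod p)`
as a congruence of `p`-integral rationals. -/
theorem stmt17 (p : ℕ) [Fact p.Prime] (hp : Odd p) (m : ℕ) (hm : m < (p - 1) / 2)
    (j : ℕ) (hj1 : m + 1 ≤ j) (hj2 : j ≤ p - m - 2) :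
    ‖(((∑ k ∈ Finset.Icc (p - 1 - j) (p - m - 1),
            ((m + k).choose k : ℚ) * (k.choose (p - 1 - j) : ℚ) /
              (((k : ℚ) - (m : ℚ)) * (k.choose m : ℚ))) -
          (-1 : ℚ) ^ j * ((p - m - 1).choose (j - m) : ℚ) /
            (((j : ℚ) + 1) * ((p - m - 1).choose (j + 1) : ℚ)) : ℚ) : ℚ_[p])‖
      ≤ (p : ℝ)⁻¹ := by
  have hprime := (Fact.out : p.Prime)
  have hp3 : 3 ≤ p := by
    rcases hp with ⟨q, hq⟩
    have := hprime.two_le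
    rcases Nat.eq_or_lt_of_le this with h|h
    · omega
    · omega
  have hm2 : 2*m + 2 ≤ p - 1 := by
    obtain ⟨q, hq⟩ := hp
    omega
  obtain ⟨J, rfl⟩ : ∃ J, j = m + J := ⟨j - m, by omega⟩
  have hJ1 : 1 ≤ J := by omega
  have hP : m + J + m + 2 ≤ p := by omega
  set A : ℕ → ℕ := fun k => (m+k).choose k * k.choose (p-1-(m+J)) with hA
  set B : ℕ → ℕ := fun k => (k-m) * k.choose m with hB
  set aR : ℕ := (p-m-1).choose J with haR
  set bR : ℕ := (m+J+1) * ((p-m-1).choose (m+J+1)) with hbRdef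
  have hBk : ∀ k ∈ Finset.Icc (p-1-(m+J)) (p-m-1), ¬ p ∣ B k := by
    intro k hk
    rw [Finset.mem_Icc] at hk
    intro hdvd
    rcases (Nat.Prime.dvd_mul hprime).mp hdvd with h|h
    · have := Nat.le_of_dvd (by omega) h
      omega
    · exact not_dvd_choose p (by omega) (by omega) h
  have hbR : ¬ p ∣ bR := by
    intro hdvd
    rcases (Nat.Prime.dvd_mul hprime).mp hdvd with h|h
    · have := Nat.le_of_dvd (by omega) h
      omega
    · exact not_dvd_choose p (by omega) (by omega) h
  set X : ℤ_[p] := (∑ k ∈ (Finset.Icc (p-1-(m+J)) (p-m-1)).attach,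
      mkDiv p (A k.1) (B k.1) (hBk k.1 k.2)) - (-1:ℤ_[p])^(m+J) * mkDiv p aR bR hbR with hX
  have hcoe : (((∑ k ∈ Finset.Icc (p - 1 - (m+J)) (p - m - 1),
            ((m + k).choose k : ℚ) * (k.choose (p - 1 - (m+J)) : ℚ) /
              (((k : ℚ) - (m : ℚ)) * (k.choose m : ℚ))) -
          (-1 : ℚ) ^ (m+J) * ((p - m - 1).choose ((m+J) - m) : ℚ) /
            (((((m+J) : ℕ) : ℚ) + 1) * ((p - m - 1).choose ((m+J) + 1) : ℚ)) : ℚ) : ℚ_[p])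
        = (X : ℚ_[p]) := by
    rw [hX, PadicInt.coe_sub, padic_coe_sum, PadicInt.coe_mul, PadicInt.coe_pow,
      PadicInt.coe_neg, PadicInt.coe_one, mkDiv_coe]
    simp only [mkDiv_coe]
    rw [Finset.sum_attach (Finset.Icc (p-1-(m+J)) (p-m-1))
      (fun k => ((A k : ℕ) : ℚ_[p]) / ((B k : ℕ) : ℚ_[p]))]
    push_cast
    congr 1
    · rw [Finset.sum_congr rfl (fun k hk => ?_)]
      have hk' := Finset.mem_Icc.mp hk
      rw [hA, hB]
      push_cast [Nat.cast_sub (show m ≤ k by omega)]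
      ring
    · rw [show (m+J) - m = J by omega, haR, hbRdef]
      push_cast
      ring
  rw [hcoe, ← PadicInt.norm_def]
  have hmem : X ∈ (Ideal.span {(p : ℤ_[p])} : Ideal ℤ_[p]) := by
    rw [← PadicInt.maximalIdeal_eq_span_p, ← PadicInt.ker_toZMod, RingHom.mem_ker]
    rw [hX, map_sub, map_sum, map_mul, map_pow, map_neg, map_one, mkDiv_toZMod]
    rw [Finset.sum_congr rfl (fun k _ => mkDiv_toZMod p (A k.1) (B k.1) (hBk k.1 k.2))]
    rw [Finset.sum_attach (Finset.Icc (p-1-(m+J)) (p-m-1))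
      (fun k => ((A k : ℕ) : ZMod p) / ((B k : ℕ) : ZMod p))]
    rw [show A = fun k => (m+k).choose k * k.choose (p-1-(m+J)) from hA]
    rw [show B = fun k => (k-m) * k.choose m from hB]
    rw [main_zmod p m J hJ1 hP]
    rw [haR, hbRdef]
    rw [div_eq_mul_inv, div_eq_mul_inv, mul_comm ((-1:ZMod p)^(m+J))]
    ring
  have hle := (PadicInt.norm_le_pow_iff_mem_span_pow X 1).mpr (by rwa [pow_one])
  calc ‖X‖ ≤ (p:ℝ)^(-(1:ℕ):ℤ) := hle
    _ = (p:ℝ)⁻¹ := by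
      rw [zpow_neg, zpow_natCast, pow_one]
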